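/- Every deterministic k-way branching program computing SumMod_2^3(k) has at least k^3 states. -/

import Mathlib

/-! ## Tree evaluation problems -/

/-- The `k`-valued input variables of the tree evaluation problem on the complete
`d`-ary tree with `h` levels: the single variable of a height-1 tree is its leaf
value; for a tree of height `h+2`, a variable is either an entry `f_root(args)`
of the root function's table, or a variable of one of the `d` principal subtrees. -/
inductive TEVar (d k : ℕ) : ℕ → Type where
  | leaf : TEVar d k 1
  | root {h : ℕ} (args : Fin d → Fin k) : TEVar d k (h + 2)
  | child {h : ℕ} (j : Fin d) (x : TEVar d k (h + 1)) : TEVar d k (h + 2)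

/-- The value of the root of the tree, computed bottom-up from an assignment of
values to all input variables. (For the degenerate height 0 it returns a junk value.) -/
def rootValue (d k : ℕ) (hk : 0 < k) : (h : ℕ) → (TEVar d k h → Fin k) → Fin k
  | 0, _ => ⟨0, hk⟩
  | 1, I => I .leaf
  | (h + 2), I => I (.root fun j => rootValue d k hk (h + 1) fun x => I (.child j x))

/-- The Boolean tree evaluation problem `BT_d^h(k)`: does the root have value 1
(represented by `(0 : Fin k)`)? -/
def BTfun (d k : ℕ) (hk : 0 < k) (h : ℕ) (I : TEVar d k h → Fin k) : Bool :=
  decide (rootValue d k hk h I = ⟨0, hk⟩)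

/-- `ThriftyVar d k hk h I v` holds iff querying variable `v` on input `I` is a
thrifty query: if `v` is an entry `f_i(args)` of the function table of an internal
node `i`, then `args` must be the tuple of correct values of the children of `i`. -/
def ThriftyVar (d k : ℕ) (hk : 0 < k) : (h : ℕ) → (TEVar d k h → Fin k) → TEVar d k h → Prop
  | 0, _, _ => True
  | 1, _, _ => True
  | (h + 2), I, .root args =>
      args = fun j => rootValue d k hk (h + 1) fun x => I (.child j x)
  | (h + 2), I, .child j x =>
      ThriftyVar d k hk (h + 1) (fun y => I (.child j y)) x

/-! ## k-way branching programs -/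

/-- A deterministic `k`-way branching program with input variables `V` (each taking
values in `[k] = Fin k`) and outputs in `R`. Each state is either a non-final state
labelled with the variable it queries (`Sum.inl v`), with `k` outedges given by
`next`, or a final state labelled with an output (`Sum.inr r`). -/
structure DBP (V : Type) (k : ℕ) (R : Type) where
  Q : Type
  fin : Fintype Q
  start : Q
  label : Q → V ⊕ R
  next : Q → Fin k → Q

namespace DBP

variable {V : Type} {k : ℕ} {R : Type}

/-- The size of a branching program is its number of states. -/
def size (B : DBP V k R) : ℕ := @Fintype.card B.Q B.fin

/-- One deterministic step on input `I` (final states are absorbing). -/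
def step (B : DBP V k R) (I : V → Fin k) (q : B.Q) : B.Q :=
  match B.label q with
  | .inl v => B.next q (I v)
  | .inr _ => q

/-- `B` computes the total function `f`: on every input, the computation reaches the
final state labelled with the correct output. -/
def Computes (B : DBP V k R) (f : (V → Fin k) → R) : Prop :=
  ∀ I : V → Fin k, ∃ t : ℕ, B.label ((B.step I)^[t] B.start) = .inr (f I)

end DBP

/-- A nondeterministic `k`-way branching program: as in `DBP`, but a non-final state
may have any number of outedges with any labels in `Fin k`, given by the edge
relation `edge q a q'`. -/
structure NBP (V : Type) (k : ℕ) (R : Type) where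
  Q : Type
  fin : Fintype Q
  start : Q
  label : Q → V ⊕ R
  edge : Q → Fin k → Q → Prop

namespace NBP

variable {V : Type} {k : ℕ} {R : Type}

/-- The size of a branching program is its number of states. -/
def size (B : NBP V k R) : ℕ := @Fintype.card B.Q B.fin

/-- One nondeterministic step on input `I`: follow an edge out of a non-final state
whose label matches the value of the queried variable. -/
def Step (B : NBP V k R) (I : V → Fin k) (q q' : B.Q) : Prop :=
  ∃ v, B.label q = .inl v ∧ B.edge q (I v) q'

/-- Some computation of `B` on input `I` ends in a final state labelled `r`. -/
def Outputs (B : NBP V k R) (I : V → Fin k) (r : R) : Prop :=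
  ∃ q, Relation.ReflTransGen (B.Step I) B.start q ∧ B.label q = .inr r

/-- `B` computes the total function `f`: on every input some computation ends in a
final state, and every computation ending in a final state ends in the one labelled
with the correct output. -/
def Computes (B : NBP V k R) (f : (V → Fin k) → R) : Prop :=
  ∀ (I : V → Fin k) (r : R), B.Outputs I r ↔ r = f I

end NBP

/-- A deterministic branching program for a tree evaluation problem is thrifty if on
every input, every query made during the computation is a thrifty query. -/
def DBPThrifty {R : Type} (d k h : ℕ) (hk : 0 < k) (B : DBP (TEVar d k h) k R) : Prop :=
  ∀ (I : TEVar d k h → Fin k) (t : ℕ) (v : TEVar d k h),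
    B.label ((B.step I)^[t] B.start) = .inl v → ThriftyVar d k hk h I v

/-- A nondeterministic branching program for a tree evaluation problem is thrifty if
for every input, every computation ending in a final state makes only thrifty
queries. -/
def NBPThrifty {R : Type} (d k h : ℕ) (hk : 0 < k) (B : NBP (TEVar d k h) k R) : Prop :=
  ∀ (I : TEVar d k h → Fin k) (n : ℕ) (path : ℕ → B.Q),
    path 0 = B.start →
    (∀ t < n, B.Step I (path t) (path (t + 1))) →
    (∃ r, B.label (path n) = .inr r) →
    ∀ t < n, ∀ v, B.label (path t) = .inl v → ThriftyVar d k hk h I v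

/-- The problem `SumMod_2^3(k)`: the input consists of two height-2 binary tree
evaluation inputs (the two principal subtrees of the height-3 tree; the root function
is fixed to be addition mod `k`), and the output is the sum mod `k` of the values of
the root's two children. -/
def sumModFun (k : ℕ) (hk : 0 < k) (I : Fin 2 × TEVar 2 k 2 → Fin k) : Fin k :=
  ⟨((rootValue 2 k hk 2 fun x => I (0, x)).val +
      (rootValue 2 k hk 2 fun x => I (1, x)).val) % k,
    Nat.mod_lt _ hk⟩


namespace SumModLower

/-! ### Equivs and instances for `TEVar` -/

def e2 {d k : ℕ} : TEVar d k 2 ≃ ((Fin d → Fin k) ⊕ Fin d) where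
  toFun x := match x with
    | .root a => .inl a
    | .child j _ => .inr j
  invFun y := match y with
    | .inl a => .root a
    | .inr j => .child j .leaf
  left_inv x := by
    cases x with
    | root a => rfl
    | child j y => cases y; rfl
  right_inv y := by cases y <;> rfl

instance {d k : ℕ} : DecidableEq (TEVar d k 2) := e2.decidableEq

instance {d k : ℕ} : Fintype (TEVar d k 2) := Fintype.ofEquiv _ e2.symm

lemma card_TEVar2 {d k : ℕ} : Fintype.card (TEVar d k 2) = k ^ d + d := by
  rw [Fintype.card_congr e2]
  simp [Fintype.card_fun]

lemma root_ne_child {d k : ℕ} {a : Fin d → Fin k} {j : Fin d} {x : TEVar d k 1} :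
    (TEVar.root a : TEVar d k 2) ≠ .child j x := fun h => by cases h

lemma child_ne_child {d k : ℕ} {j j' : Fin d} {x x' : TEVar d k 1} (h : j ≠ j') :
    (TEVar.child j x : TEVar d k 2) ≠ .child j' x' := by
  intro he
  injection he with hh h1 h2
  exact h h1

lemma root_inj {d k : ℕ} {a b : Fin d → Fin k} (h : (TEVar.root a : TEVar d k 2) = .root b) :
    a = b := by injection h


section Dyn

variable {V : Type} {k : ℕ} {R : Type} (B : DBP V k R)

lemma step_final {I : V → Fin k} {q : B.Q} {r : R} (h : B.label q = .inr r) :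
    B.step I q = q := by
  unfold DBP.step
  rw [h]

lemma iter_final {I : V → Fin k} {q : B.Q} {r : R} (h : B.label q = .inr r) :
    ∀ m, (B.step I)^[m] q = q := by
  intro m
  induction m with
  | zero => rfl
  | succ m ih => rw [Function.iterate_succ_apply', ih, step_final B h]

lemma iter_eventually {I : V → Fin k} {q : B.Q} {r : R} {n m : ℕ}
    (h : B.label ((B.step I)^[n] q) = .inr r) (hnm : n ≤ m) :
    (B.step I)^[m] q = (B.step I)^[n] q := by
  obtain ⟨d, rfl⟩ := Nat.exists_eq_add_of_le hnm
  rw [Nat.add_comm, Function.iterate_add_apply]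
  exact iter_final B h d

lemma step_congr {I I' : V → Fin k} {q : B.Q}
    (h : ∀ u, B.label q = .inl u → I u = I' u) : B.step I q = B.step I' q := by
  unfold DBP.step
  cases hl : B.label q with
  | inl u => simp only []; rw [h u hl]
  | inr r => rfl

lemma agree_iter {I I' : V → Fin k} {v : V} (hag : ∀ x, x ≠ v → I x = I' x)
    (q : B.Q) (h : ∀ s, B.label ((B.step I)^[s] q) ≠ .inl v) :
    ∀ n, (B.step I)^[n] q = (B.step I')^[n] q := by
  intro n
  induction n with
  | zero => rfl
  | succ n ih =>
    rw [Function.iterate_succ_apply', Function.iterate_succ_apply', ← ih]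
    exact step_congr B (fun u hl => hag u (fun he => h n (he ▸ hl)))

variable {f : (V → Fin k) → R}

lemma output_unique (hB : B.Computes f) {I : V → Fin k} {n : ℕ} {r : R}
    (h : B.label ((B.step I)^[n] B.start) = .inr r) : r = f I := by
  obtain ⟨t, ht⟩ := hB I
  rcases le_total n t with hle | hle
  · rw [iter_eventually B h hle] at ht
    exact Sum.inr.inj (h.symm.trans ht)
  · rw [iter_eventually B ht hle] at h
    exact (Sum.inr.inj (ht.symm.trans h)).symm

lemma last_query (hB : B.Computes f) {I I' : V → Fin k} {v : V}
    (hag : ∀ x, x ≠ v → I x = I' x) (hne : f I ≠ f I') :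
    ∃ t, B.label ((B.step I)^[t] B.start) = .inl v ∧
      ∀ s, t < s → B.label ((B.step I)^[s] B.start) ≠ .inl v := by
  classical
  obtain ⟨t0, ht0⟩ := hB I
  have hbound : ∀ s, B.label ((B.step I)^[s] B.start) = .inl v → s < t0 := by
    intro s hs
    by_contra hge
    push_neg at hge
    rw [iter_eventually B ht0 hge, ht0] at hs
    cases hs
  have hex : ∃ s, B.label ((B.step I)^[s] B.start) = .inl v := by
    by_contra hno
    push_neg at hno
    rw [agree_iter B hag B.start hno t0] at ht0
    exact hne (output_unique B hB ht0)
  set P : ℕ → Prop := fun s => B.label ((B.step I)^[s] B.start) = .inl v with hP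
  obtain ⟨s0, hs0⟩ := hex
  refine ⟨Nat.findGreatest P t0, Nat.findGreatest_spec (le_of_lt (hbound s0 hs0)) hs0, ?_⟩
  intro s hts hPs
  exact Nat.findGreatest_is_greatest hts (le_of_lt (hbound s hPs)) hPs

end Dyn

/-! ### The sumMod function -/

abbrev Vt (k : ℕ) : Type := Fin 2 × TEVar 2 k 2

def vvr (k : ℕ) (I : Vt k → Fin k) (i : Fin 2) : Vt k :=
  (i, .root fun j => I (i, .child j .leaf))

lemma vvr_fst (k : ℕ) (I : Vt k → Fin k) (i : Fin 2) : (vvr k I i).1 = i := rfl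

lemma sumMod_val {k : ℕ} (hk0 : 0 < k) (I : Vt k → Fin k) :
    (sumModFun k hk0 I).val = ((I (vvr k I 0)).val + (I (vvr k I 1)).val) % k := rfl

lemma pair_child_ne_root {k : ℕ} {i i' : Fin 2} {j : Fin 2} {x : TEVar 2 k 1}
    {a : Fin 2 → Fin k} : ((i, TEVar.child j x) : Vt k) ≠ (i', .root a) := by
  intro h
  injection h with h1 h2
  exact root_ne_child h2.symm

lemma vvr_ne_vvr {k : ℕ} {I I' : Vt k → Fin k} {i i' : Fin 2} (h : i ≠ i') :
    vvr k I i ≠ vvr k I' i' := by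
  intro he
  exact h (congrArg Prod.fst he)

lemma vvr_update {k : ℕ} (I : Vt k → Fin k) (i : Fin 2) (c : Fin k) (j : Fin 2) :
    vvr k (Function.update I (vvr k I i) c) j = vvr k I j := by
  unfold vvr
  refine congrArg _ (congrArg _ (funext fun j' => ?_))
  exact Function.update_of_ne pair_child_ne_root c I

lemma sumMod_flip {k : ℕ} (hk : 2 ≤ k) (hk0 : 0 < k) (I : Vt k → Fin k) (i : Fin 2) :
    sumModFun k hk0 (Function.update I (vvr k I i)
      ⟨((I (vvr k I i)).val + 1) % k, Nat.mod_lt _ hk0⟩) ≠ sumModFun k hk0 I := by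
  intro he
  have hv := congrArg Fin.val he
  set c : Fin k := ⟨((I (vvr k I i)).val + 1) % k, Nat.mod_lt _ hk0⟩ with hc
  set u := Function.update I (vvr k I i) c with hu
  rw [sumMod_val, sumMod_val, vvr_update, vvr_update] at hv
  have h01 : ∀ b : Fin 2, b = 0 ∨ b = 1 := by decide
  have key : ∀ x y : ℕ, ((x + 1) % k + y) % k = (x + y) % k → False := by
    intro x y hxy
    rw [Nat.mod_add_mod] at hxy
    have h1 : x + y + 1 ≡ x + y + 0 [MOD k] := by
      unfold Nat.ModEq
      rw [Nat.add_zero, show x + y + 1 = x + 1 + y by omega]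
      exact hxy
    have h2 : 1 ≡ 0 [MOD k] := Nat.ModEq.add_left_cancel' (x + y) h1
    have h3 : k ∣ 1 := (Nat.modEq_zero_iff_dvd).mp h2
    have := Nat.le_of_dvd Nat.one_pos h3
    omega
  rcases h01 i with hi | hi <;> subst hi
  · rw [hu, Function.update_self, Function.update_of_ne (vvr_ne_vvr (by decide))] at hv
    exact key _ _ hv
  · rw [hu, Function.update_self, Function.update_of_ne (vvr_ne_vvr (by decide))] at hv
    rw [Nat.add_comm ((I (vvr k I 0)).val), Nat.add_comm ((I (vvr k I 0)).val)] at hv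
    exact key _ _ hv
  
lemma card_filter_eqOn {α : Type} [Fintype α] [DecidableEq α] {k : ℕ}
    (s : Finset α) (g : α → Fin k) :
    (Finset.univ.filter (fun d : α → Fin k => ∀ x ∈ s, d x = g x)).card ≤
      k ^ (Fintype.card α - s.card) := by
  classical
  have hle := Finset.card_le_card_of_injOn
    (s := Finset.univ.filter (fun d : α → Fin k => ∀ x ∈ s, d x = g x))
    (t := (Finset.univ : Finset ({y // y ∈ sᶜ} → Fin k)))
    (fun (d : α → Fin k) (x : {y // y ∈ sᶜ}) => d x.1)
    (fun d _ => Finset.mem_univ _) ?_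
  · refine hle.trans (le_of_eq ?_)
    rw [Finset.card_univ, Fintype.card_fun]
    congr 1
    · exact Fintype.card_fin k
    · rw [Fintype.card_coe, Finset.card_compl]
  · intro d1 h1 d2 h2 heq
    simp only [Finset.coe_filter, Set.mem_setOf_eq, Finset.mem_univ, true_and] at h1 h2
    funext x
    by_cases hx : x ∈ s
    · rw [h1 x hx, h2 x hx]
    · exact congrFun heq ⟨x, Finset.mem_compl.mpr hx⟩

lemma card_Vt {k : ℕ} : Fintype.card (Vt k) = 2 * k ^ 2 + 4 := by
  rw [Fintype.card_prod, card_TEVar2, Fintype.card_fin]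
  ring
instance {d k : ℕ} : Subsingleton (TEVar d k 1) := ⟨fun x y => by cases x; cases y; rfl⟩

@[simp] lemma child_eq_child_iff {d k : ℕ} {j j' : Fin d} {x x' : TEVar d k 1} :
    (TEVar.child j x : TEVar d k 2) = .child j' x' ↔ j = j' := by
  constructor
  · intro h; injection h with h0 h1 h2
  · intro h; rw [h, Subsingleton.elim x x']

@[simp] lemma root_eq_child_iff {d k : ℕ} {a : Fin d → Fin k} {j : Fin d} {x : TEVar d k 1} :
    ((TEVar.root a : TEVar d k 2) = .child j x) ↔ False :=
  ⟨fun h => root_ne_child h, False.elim⟩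

@[simp] lemma child_eq_root_iff {d k : ℕ} {a : Fin d → Fin k} {j : Fin d} {x : TEVar d k 1} :
    ((TEVar.child j x : TEVar d k 2) = .root a) ↔ False :=
  ⟨fun h => root_ne_child h.symm, False.elim⟩

@[simp] lemma root_eq_root_iff {d k : ℕ} {a b : Fin d → Fin k} :
    ((TEVar.root a : TEVar d k 2) = .root b) ↔ a = b :=
  ⟨root_inj, fun h => by rw [h]⟩

lemma mod_cancel {k a b c : ℕ} (hb : b < k) (hc : c < k)
    (h : (a + b) % k = (a + c) % k) : b = c := by
  have h1 : b ≡ c [MOD k] := Nat.ModEq.add_left_cancel' a h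
  rwa [Nat.ModEq, Nat.mod_eq_of_lt hb, Nat.mod_eq_of_lt hc] at h1

lemma mod_cancel' {k a b c : ℕ} (hb : b < k) (hc : c < k)
    (h : (b + a) % k = (c + a) % k) : b = c := by
  rw [Nat.add_comm b a, Nat.add_comm c a] at h
  exact mod_cancel hb hc h

lemma arith1 {m : ℕ} (h : 1 ≤ m) : 2 * m + 4 - 5 = 2 * m - 1 := by omega

lemma arith2 {m : ℕ} (h : 1 ≤ m) : 2 + (2 * m - 1) = 2 * m + 1 := by omega
end SumModLower

set_option maxHeartbeats 2000000 in
open SumModLower in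
/-- Every deterministic `k`-way branching program computing `SumMod_2^3(k)` has at
least `k^3` states. -/
theorem det_sumMod_lower (k : ℕ) (hk : 2 ≤ k) :
    ∀ B : DBP (Fin 2 × TEVar 2 k 2) k (Fin k),
      B.Computes (sumModFun k (by omega)) → k ^ 3 ≤ B.size := by
  intro B hB
  classical
  letI : Fintype B.Q := B.fin
  have hk0 : 0 < k := by omega
  have hB' : B.Computes (sumModFun k hk0) := hB
  have h01 : ∀ b : Fin 2, b = 0 ∨ b = 1 := by decide
  have hsub : ∀ b : Fin 2, b ≠ 1 - b := by decide
  -- last query times to the two relevant root-table entries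
  have hlqex : ∀ (I : Vt k → Fin k) (i : Fin 2), ∃ t,
      B.label ((B.step I)^[t] B.start) = .inl (vvr k I i) ∧
      ∀ s, t < s → B.label ((B.step I)^[s] B.start) ≠ .inl (vvr k I i) := by
    intro I i
    refine last_query B hB' (I' := Function.update I (vvr k I i)
      ⟨((I (vvr k I i)).val + 1) % k, Nat.mod_lt _ hk0⟩) ?_ ?_
    · intro x hx
      exact (Function.update_of_ne hx _ I).symm
    · exact fun h => sumMod_flip hk hk0 I i h.symm
  choose tq ht1 ht2 using hlqex
  have tne : ∀ I : Vt k → Fin k, tq I 0 ≠ tq I 1 := by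
    intro I h
    have h0 := ht1 I 0
    rw [h] at h0
    have : vvr k I 1 = vvr k I 0 := Sum.inl.inj ((ht1 I 1).symm.trans h0)
    exact (by decide : (1 : Fin 2) ≠ 0) (congrArg Prod.fst this)
  set ci : (Vt k → Fin k) → Fin 2 := fun I => if tq I 0 < tq I 1 then 1 else 0 with hci_def
  set oi : (Vt k → Fin k) → Fin 2 := fun I => 1 - ci I with hoi_def
  have hcio : ∀ I, ci I ≠ oi I := fun I => hsub (ci I)
  have htlt : ∀ I, tq I (oi I) < tq I (ci I) := by
    intro I
    by_cases h : tq I 0 < tq I 1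
    · simp only [hci_def, hoi_def, if_pos h]
      have e : (1 - 1 : Fin 2) = 0 := by decide
      rw [e]; exact h
    · have h' : tq I 1 < tq I 0 := lt_of_le_of_ne (not_lt.mp h) (fun he => tne I he.symm)
      simp only [hci_def, hoi_def, if_neg h]
      have e : (1 - 0 : Fin 2) = 1 := by decide
      rw [e]; exact h'
  set qI : (Vt k → Fin k) → B.Q := fun I => (B.step I)^[tq I (ci I)] B.start with hqI_def
  have hlab : ∀ I, B.label (qI I) = .inl (vvr k I (ci I)) := fun I => ht1 I (ci I)
  set msk : (Vt k → Fin k) → (Vt k → Fin k) := fun I x =>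
    if x = vvr k I (oi I) ∨ x = (ci I, TEVar.child 0 .leaf) ∨ x = (ci I, TEVar.child 1 .leaf)
    then ⟨0, hk0⟩ else I x with hmsk_def
  have hmsk_off : ∀ (I : Vt k → Fin k) (x : Vt k), x ≠ vvr k I (oi I) →
      x ≠ (ci I, TEVar.child 0 .leaf) → x ≠ (ci I, TEVar.child 1 .leaf) → msk I x = I x := by
    intro I x hx1 hx2 hx3
    simp only [hmsk_def]
    rw [if_neg (by tauto)]
  have hmsk_leaf : ∀ (I : Vt k → Fin k) (j : Fin 2),
      msk I (oi I, TEVar.child j .leaf) = I (oi I, TEVar.child j .leaf) := by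
    intro I j
    refine hmsk_off I _ pair_child_ne_root ?_ ?_
    · intro h; injection h with ha hb; exact hcio I ha.symm
    · intro h; injection h with ha hb; exact hcio I ha.symm
  have hmsk_vvr : ∀ I : Vt k → Fin k, vvr k (msk I) (oi I) = vvr k I (oi I) := by
    intro I
    unfold vvr
    exact congrArg (fun t => ((oi I, TEVar.root t) : Vt k)) (funext fun j => hmsk_leaf I j)
  have hsuffix : ∀ (I : Vt k → Fin k) (n : ℕ),
      (B.step I)^[n] (qI I) = (B.step (Function.update I (vvr k I (oi I)) ⟨0, hk0⟩))^[n] (qI I) := by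
    intro I n
    refine agree_iter B (fun x hx => (Function.update_of_ne hx _ I).symm) (qI I) ?_ n
    intro s
    simp only [hqI_def]
    rw [← Function.iterate_add_apply]
    exact ht2 I (oi I) (s + tq I (ci I)) (lt_of_lt_of_le (htlt I) (Nat.le_add_left _ _))
  have houtput : ∀ I : Vt k → Fin k, ∃ n,
      B.label ((B.step I)^[n] (qI I)) = .inr (sumModFun k hk0 I) := by
    intro I
    obtain ⟨t0, ht0⟩ := hB' I
    refine ⟨max t0 (tq I (ci I)) - tq I (ci I), ?_⟩
    simp only [hqI_def]
    rw [← Function.iterate_add_apply, Nat.sub_add_cancel (le_max_right _ _)]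
    rw [iter_eventually B ht0 (le_max_left _ _)]
    exact ht0
  -- injectivity of I ↦ (qI I, msk I)
  have hinj : ∀ I I'' : Vt k → Fin k, qI I = qI I'' → msk I = msk I'' → I = I'' := by
    intro I I'' hq hm
    have hl' : vvr k I (ci I) = vvr k I'' (ci I'') :=
      Sum.inl.inj ((hlab I).symm.trans ((congrArg B.label hq).trans (hlab I'')))
    have hci2 : ci I = ci I'' := congrArg Prod.fst hl'
    have hoi2 : oi I = oi I'' := by simp only [hoi_def, hci2]
    have hroot : (TEVar.root fun j => I (ci I, TEVar.child j .leaf) : TEVar 2 k 2) =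
        .root fun j => I'' (ci I'', TEVar.child j .leaf) := congrArg Prod.snd hl'
    have hfuns := root_inj hroot
    have hleaves : ∀ j : Fin 2,
        I (ci I, TEVar.child j .leaf) = I'' (ci I, TEVar.child j .leaf) := by
      intro j
      have := congrFun hfuns j
      rwa [← hci2] at this
    have hleafo : ∀ j : Fin 2,
        I (oi I, TEVar.child j .leaf) = I'' (oi I, TEVar.child j .leaf) := by
      intro j
      have h2 := hmsk_leaf I'' j
      rw [← hoi2] at h2
      exact (hmsk_leaf I j).symm.trans ((congrFun hm _).trans h2)
    have hvvro : vvr k I (oi I) = vvr k I'' (oi I'') := by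
      rw [← hoi2]
      unfold vvr
      exact congrArg (fun t => ((oi I, TEVar.root t) : Vt k)) (funext hleafo)
    have hIoff : ∀ x : Vt k, x ≠ vvr k I (oi I) → I x = I'' x := by
      intro x hx
      by_cases hx0 : x = (ci I, TEVar.child 0 .leaf)
      · rw [hx0]; exact hleaves 0
      by_cases hx1 : x = (ci I, TEVar.child 1 .leaf)
      · rw [hx1]; exact hleaves 1
      have e1 := hmsk_off I x hx hx0 hx1
      have e2 := hmsk_off I'' x (by rw [← hvvro]; exact hx)
        (by rw [← hci2]; exact hx0) (by rw [← hci2]; exact hx1)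
      rw [← e1, hm, e2]
    have hupd : Function.update I (vvr k I (oi I)) ⟨0, hk0⟩ =
        Function.update I'' (vvr k I'' (oi I'')) ⟨0, hk0⟩ := by
      rw [← hvvro]
      funext x
      by_cases hx : x = vvr k I (oi I)
      · rw [hx, Function.update_self, Function.update_self]
      · rw [Function.update_of_ne hx, Function.update_of_ne hx, hIoff x hx]
    have hfeq : sumModFun k hk0 I = sumModFun k hk0 I'' := by
      obtain ⟨n1, hn1⟩ := houtput I
      obtain ⟨n2, hn2⟩ := houtput I''
      rw [hsuffix I n1] at hn1
      rw [hsuffix I'' n2, ← hupd, ← hq] at hn2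
      rcases le_total n1 n2 with hle | hle
      · rw [iter_eventually B hn1 hle] at hn2
        exact Sum.inr.inj (hn1.symm.trans hn2)
      · rw [iter_eventually B hn2 hle] at hn1
        exact Sum.inr.inj (hn1.symm.trans hn2)
    have hvvci : vvr k I (ci I) = vvr k I'' (ci I) := by
      rw [← hci2] at hl'; exact hl'
    have hvvoi : vvr k I (oi I) = vvr k I'' (oi I) := by
      rw [← hoi2] at hvvro; exact hvvro
    have hIci : I (vvr k I (ci I)) = I'' (vvr k I (ci I)) :=
      hIoff _ (vvr_ne_vvr (hcio I))
    have hval : I (vvr k I (oi I)) = I'' (vvr k I (oi I)) := by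
      have hv := congrArg Fin.val hfeq
      rw [sumMod_val, sumMod_val] at hv
      have hoi01 : (ci I = 0 ∧ oi I = 1) ∨ (ci I = 1 ∧ oi I = 0) := by
        rcases h01 (ci I) with h | h
        · left; refine ⟨h, ?_⟩
          simp only [hoi_def]; rw [h]; decide
        · right; refine ⟨h, ?_⟩
          simp only [hoi_def]; rw [h]; decide
      rcases hoi01 with ⟨hc, ho⟩ | ⟨hc, ho⟩
      · rw [ho]
        rw [hc] at hvvci hIci
        rw [ho] at hvvoi
        rw [← hvvci, ← hvvoi, ← hIci] at hv
        exact Fin.val_injective (mod_cancel (I (vvr k I 1)).isLt (I'' (vvr k I 1)).isLt hv)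
      · rw [ho]
        rw [hc] at hvvci hIci
        rw [ho] at hvvoi
        rw [← hvvci, ← hvvoi, ← hIci] at hv
        exact Fin.val_injective (mod_cancel' (I (vvr k I 0)).isLt (I'' (vvr k I 0)).isLt hv)
    funext x
    by_cases hx : x = vvr k I (oi I)
    · rw [hx]; exact hval
    · exact hIoff x hx
  -- counting
  set Sf : Fin k × Fin k → Fin 2 → Fin 2 → Finset (Vt k) := fun ab i0 o0 =>
    {(i0, TEVar.child 0 .leaf), (i0, TEVar.child 1 .leaf),
      (o0, TEVar.child 0 .leaf), (o0, TEVar.child 1 .leaf),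
      (o0, TEVar.root fun j => if j = 0 then ab.1 else ab.2)} with hSf_def
  set gf : Fin k × Fin k → Fin 2 → Vt k → Fin k := fun ab o0 x =>
    if x = (o0, TEVar.child 0 .leaf) then ab.1
    else if x = (o0, TEVar.child 1 .leaf) then ab.2 else ⟨0, hk0⟩ with hgf_def
  have hfib : ∀ b : B.Q,
      (Finset.univ.filter (fun I : Vt k → Fin k => qI I = b)).card ≤ k ^ (2 * k ^ 2 + 1) := by
    intro b
    rcases Finset.eq_empty_or_nonempty
      (Finset.univ.filter (fun I : Vt k → Fin k => qI I = b)) with he | ⟨I0, hI0⟩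
    · rw [he, Finset.card_empty]; exact Nat.zero_le _
    have hI0q : qI I0 = b := (Finset.mem_filter.mp hI0).2
    have hcifix : ∀ I : Vt k → Fin k, qI I = b → ci I = ci I0 := by
      intro I hIb
      have : vvr k I (ci I) = vvr k I0 (ci I0) :=
        Sum.inl.inj ((hlab I).symm.trans
          ((congrArg B.label (hIb.trans hI0q.symm)).trans (hlab I0)))
      exact congrArg Prod.fst this
    set i0 : Fin 2 := ci I0 with hi0
    set o0 : Fin 2 := 1 - i0 with ho0
    have hio0 : i0 ≠ o0 := hsub i0
    have hne_io : ∀ u v : TEVar 2 k 2, ((i0, u) : Vt k) ≠ (o0, v) := by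
      intro u v h; injection h with h1 _; exact hio0 h1
    have hstep1 : (Finset.univ.filter (fun I : Vt k → Fin k => qI I = b)).card ≤
        (Finset.univ.filter (fun d : Vt k → Fin k =>
          d (i0, TEVar.child 0 .leaf) = ⟨0, hk0⟩ ∧ d (i0, TEVar.child 1 .leaf) = ⟨0, hk0⟩ ∧
          d (vvr k d o0) = ⟨0, hk0⟩)).card := by
      refine Finset.card_le_card_of_injOn msk ?_ ?_
      · intro I hI
        have hIb : qI I = b := (Finset.mem_filter.mp hI).2
        have hciI : ci I = i0 := hcifix I hIb
        have hoiI : oi I = o0 := by simp only [hoi_def]; rw [hciI]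
        refine Finset.mem_filter.mpr ⟨Finset.mem_univ _, ?_, ?_, ?_⟩
        · simp only [hmsk_def]
          rw [if_pos (Or.inr (Or.inl (by rw [hciI])))]
        · simp only [hmsk_def]
          rw [if_pos (Or.inr (Or.inr (by rw [hciI])))]
        · rw [← hoiI, hmsk_vvr I]
          simp only [hmsk_def]
          simp
      · intro I hI I' hI' heq
        simp only [Finset.coe_filter, Set.mem_setOf_eq, Finset.mem_univ, true_and] at hI hI'
        exact hinj I I' (hI.trans hI'.symm) heq
    refine hstep1.trans ?_
    have hsub2 : (Finset.univ.filter (fun d : Vt k → Fin k =>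
          d (i0, TEVar.child 0 .leaf) = ⟨0, hk0⟩ ∧ d (i0, TEVar.child 1 .leaf) = ⟨0, hk0⟩ ∧
          d (vvr k d o0) = ⟨0, hk0⟩)) ⊆
        (Finset.univ : Finset (Fin k × Fin k)).biUnion (fun ab =>
          Finset.univ.filter (fun d : Vt k → Fin k =>
            ∀ x ∈ Sf ab i0 o0, d x = gf ab o0 x)) := by
      intro d hd
      obtain ⟨-, hd1, hd2, hd3⟩ := Finset.mem_filter.mp hd
      refine Finset.mem_biUnion.mpr ⟨(d (o0, TEVar.child 0 .leaf), d (o0, TEVar.child 1 .leaf)),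
        Finset.mem_univ _, Finset.mem_filter.mpr ⟨Finset.mem_univ _, ?_⟩⟩
      intro x hx
      have hne10 : ((o0, TEVar.child 1 .leaf) : Vt k) ≠ (o0, TEVar.child 0 .leaf) := by
        intro h; injection h with h1 h2; rw [child_eq_child_iff] at h2
        exact (by decide : (1 : Fin 2) ≠ 0) h2
      have hne_rc : ∀ (a : Fin 2 → Fin k) (j : Fin 2),
          ((o0, TEVar.root a) : Vt k) ≠ (o0, TEVar.child j .leaf) := by
        intro a j h; injection h with h1 h2; exact root_ne_child h2
      simp only [hSf_def, Finset.mem_insert, Finset.mem_singleton] at hx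
      simp only [hgf_def]
      rcases hx with rfl | rfl | rfl | rfl | rfl
      · rw [if_neg (hne_io _ _), if_neg (hne_io _ _)]; exact hd1
      · rw [if_neg (hne_io _ _), if_neg (hne_io _ _)]; exact hd2
      · rw [if_pos rfl]
      · rw [if_neg hne10, if_pos rfl]
      · rw [if_neg (hne_rc _ _), if_neg (hne_rc _ _)]
        have he : (fun j : Fin 2 => if j = 0 then d (o0, TEVar.child 0 .leaf)
            else d (o0, TEVar.child 1 .leaf)) = fun j => d (o0, TEVar.child j .leaf) := by
          funext j
          rcases h01 j with h | h <;> subst h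
          · rw [if_pos rfl]
          · rw [if_neg (by decide : (1 : Fin 2) ≠ 0)]
        rw [he]
        exact hd3
    refine (Finset.card_le_card hsub2).trans ?_
    refine Finset.card_biUnion_le.trans ?_
    have hcell : ∀ ab : Fin k × Fin k, (Finset.univ.filter (fun d : Vt k → Fin k =>
        ∀ x ∈ Sf ab i0 o0, d x = gf ab o0 x)).card ≤ k ^ (2 * k ^ 2 - 1) := by
      intro ab
      refine (card_filter_eqOn _ _).trans (le_of_eq ?_)
      have hScard : (Sf ab i0 o0).card = 5 := by
        simp only [hSf_def]
        rw [Finset.card_insert_of_notMem, Finset.card_insert_of_notMem,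
          Finset.card_insert_of_notMem, Finset.card_insert_of_notMem,
          Finset.card_singleton]
        · simp [Prod.ext_iff]
        · simp [Prod.ext_iff]
        · simp [Prod.ext_iff, hio0, hio0.symm]
        · simp [Prod.ext_iff, hio0, hio0.symm]
      have hexp : Fintype.card (Vt k) - (Sf ab i0 o0).card = 2 * k ^ 2 - 1 := by
        rw [card_Vt, hScard]
        exact arith1 (Nat.one_le_pow 2 k hk0)
      rw [hexp]
    refine (Finset.sum_le_sum (fun ab _ => hcell ab)).trans ?_
    rw [Finset.sum_const, smul_eq_mul, Finset.card_univ, Fintype.card_prod, Fintype.card_fin]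
    have hexp2 : 2 + (2 * k ^ 2 - 1) = 2 * k ^ 2 + 1 :=
      arith2 (Nat.one_le_pow 2 k hk0)
    have he2 : k * k * k ^ (2 * k ^ 2 - 1) = k ^ (2 * k ^ 2 + 1) := by
      rw [← pow_two, ← pow_add, hexp2]
    rw [he2]
  have hcount : Fintype.card (Vt k → Fin k) ≤ B.size * k ^ (2 * k ^ 2 + 1) := by
    rw [← Finset.card_univ]
    rw [Finset.card_eq_sum_card_fiberwise (f := qI) (t := Finset.univ)
      (fun I _ => Finset.mem_univ _)]
    calc ∑ b ∈ (Finset.univ : Finset B.Q),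
        (Finset.univ.filter (fun I : Vt k → Fin k => qI I = b)).card
        ≤ ∑ _b ∈ (Finset.univ : Finset B.Q), k ^ (2 * k ^ 2 + 1) :=
          Finset.sum_le_sum (fun b _ => hfib b)
      _ = B.size * k ^ (2 * k ^ 2 + 1) := by
          rw [Finset.sum_const, smul_eq_mul, Finset.card_univ]
          rfl
  rw [Fintype.card_fun, Fintype.card_fin, card_Vt] at hcount
  have hsplit : k ^ (2 * k ^ 2 + 4) = k ^ 3 * k ^ (2 * k ^ 2 + 1) := by
    rw [← pow_add]
    congr 1
    omega
  rw [hsplit] at hcount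
  exact Nat.le_of_mul_le_mul_right hcount (pow_pos hk0 _)
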